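/- If C is a self-dual Z_4-code of length n, then its residue code C^{(1)} is a doubly even binary code and C^{(1)} equals the dual of the torsion code: C^{(1)} = (C^{(2)})^⊥. -/

import Mathlib

open Finset

def z4inner {n : ℕ} (x y : Fin n → ZMod 4) : ZMod 4 :=
  ∑ i : Fin n, x i * y i

def wtB {n : ℕ} (y : Fin n → ZMod 2) : ℕ :=
  (Finset.univ.filter (fun i => y i ≠ 0)).card

/-- lift of a binary vector to `Z_4` with entries in `{0,1}` -/
def liftB {n : ℕ} (y : Fin n → ZMod 2) : Fin n → ZMod 4 :=
  fun i => (((y i).val : ℕ) : ZMod 4)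

/-- coordinatewise reduction mod 2 -/
def res2 {n : ℕ} (c : Fin n → ZMod 4) : Fin n → ZMod 2 :=
  fun i => (((c i).val : ℕ) : ZMod 2)

namespace SelfDualAux

lemma sq_eq (a : ZMod 4) :
    a * a = if ((a.val : ℕ) : ZMod 2) ≠ 0 then (1 : ZMod 4) else 0 := by revert a; decide

lemma two_mul_eq_zero (a : ZMod 4) :
    2 * a = 0 ↔ ((a.val : ℕ) : ZMod 2) = 0 := by revert a; decide

def φ : ZMod 4 →+* ZMod 2 := ZMod.castHom (show (2:ℕ) ∣ 4 by norm_num) (ZMod 2)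

lemma phi_eq (a : ZMod 4) : φ a = ((a.val : ℕ) : ZMod 2) := by revert a; decide

lemma lift_phi (b : ZMod 2) : φ (((b.val : ℕ) : ZMod 4)) = b := by revert b; decide

lemma lift_add (a b : ZMod 2) :
    (2 : ZMod 4) * ((((a + b).val : ℕ)) : ZMod 4)
      = 2 * ((a.val : ℕ) : ZMod 4) + 2 * ((b.val : ℕ) : ZMod 4) := by revert a b; decide

lemma zmod2_cases (a : ZMod 2) : a = 0 ∨ a = 1 := by revert a; decide

variable {n : ℕ}

/-- the binary dot-product bilinear form -/
def B (n : ℕ) : LinearMap.BilinForm (ZMod 2) (Fin n → ZMod 2) :=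
  LinearMap.mk₂ (ZMod 2) (fun x y => ∑ i, x i * y i)
    (fun x x' y => by simp [add_mul, Finset.sum_add_distrib])
    (fun a x y => by simp [Finset.mul_sum, mul_assoc])
    (fun x y y' => by simp [mul_add, Finset.sum_add_distrib])
    (fun a x y => by simp [Finset.mul_sum, mul_left_comm, mul_comm, mul_assoc])

lemma B_apply (x y : Fin n → ZMod 2) : B n x y = ∑ i, x i * y i := rfl

lemma B_refl : (B n).IsRefl := by
  intro x y h
  rw [B_apply] at h ⊢
  rw [Finset.sum_congr rfl fun i _ => mul_comm (y i) (x i)]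
  exact h

lemma B_nondegen : (B n).Nondegenerate := by
  constructor <;> intro x hx <;> funext i <;> have := hx (Pi.single i 1) <;> rw [B_apply] at this <;>
  simpa [Pi.single_apply, mul_ite, ite_mul, Finset.sum_ite_eq', Finset.sum_ite_eq] using this

/-- key computation -/
lemma key (c : Fin n → ZMod 4) (t : Fin n → ZMod 2) :
    z4inner c ((2 : ZMod 4) • liftB t) = 0 ↔ ∑ i, res2 c i * t i = 0 := by
  have h1 : z4inner c ((2 : ZMod 4) • liftB t) = 2 * ∑ i, c i * liftB t i := by
    rw [z4inner, Finset.mul_sum]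
    refine Finset.sum_congr rfl fun i _ => ?_
    simp [Pi.smul_apply, smul_eq_mul]; ring
  rw [h1, two_mul_eq_zero, ← phi_eq, map_sum]
  have h2 : ∀ i, φ (c i * liftB t i) = res2 c i * t i := by
    intro i
    have h3 : φ (liftB t i) = t i := lift_phi (t i)
    rw [map_mul, h3, phi_eq]
    rfl
  rw [Finset.sum_congr rfl fun i _ => h2 i]

lemma z4inner_comm (x y : Fin n → ZMod 4) : z4inner x y = z4inner y x :=
  Finset.sum_congr rfl fun i _ => mul_comm _ _

end SelfDualAux

open SelfDualAux in
theorem selfdual_residue_doubly_even_and_dual_torsion {n : ℕ}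
    (C : Submodule (ZMod 4) (Fin n → ZMod 4))
    (hsd : ∀ x, x ∈ C ↔ ∀ y ∈ C, z4inner x y = 0) :
    (∀ c ∈ C, 4 ∣ wtB (res2 c)) ∧
    (∀ y : Fin n → ZMod 2,
      (∃ c ∈ C, y = res2 c) ↔
        ∀ t : Fin n → ZMod 2, (2 : ZMod 4) • liftB t ∈ C → ∑ i : Fin n, y i * t i = 0) := by
  constructor
  · -- doubly even
    intro c hc
    have h0 : z4inner c c = 0 := (hsd c).mp hc c hc
    have h1 : z4inner c c = ((wtB (res2 c) : ℕ) : ZMod 4) := by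
      rw [z4inner, wtB]
      rw [Finset.sum_congr rfl fun i _ => sq_eq (c i)]
      rw [Finset.sum_boole]
      rfl
    rw [h1] at h0
    exact (ZMod.natCast_eq_zero_iff _ 4).mp h0
  · -- residue = torsion dual
    -- residue submodule
    set R : Submodule (ZMod 2) (Fin n → ZMod 2) :=
      { carrier := {y | ∃ c ∈ C, y = res2 c}
        zero_mem' := ⟨0, C.zero_mem, by funext i; simp [res2]⟩
        add_mem' := by
          rintro a b ⟨c, hc, rfl⟩ ⟨d, hd, rfl⟩
          refine ⟨c + d, C.add_mem hc hd, ?_⟩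
          funext i
          show res2 c i + res2 d i = res2 (c + d) i
          simp only [res2, ← phi_eq]
          rw [← map_add]
          rfl
        smul_mem' := by
          intro a y hy
          rcases zmod2_cases a with rfl | rfl
          · exact ⟨0, C.zero_mem, by funext i; simp [res2]⟩
          · simpa using hy } with hR
    -- torsion submodule
    set T : Submodule (ZMod 2) (Fin n → ZMod 2) :=
      { carrier := {t | (2 : ZMod 4) • liftB t ∈ C}
        zero_mem' := by
          show (2 : ZMod 4) • liftB (0 : Fin n → ZMod 2) ∈ C
          have h0 : liftB (0 : Fin n → ZMod 2) = 0 := by funext i; simp [liftB]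
          rw [h0, smul_zero]; exact C.zero_mem
        add_mem' := by
          intro a b ha hb
          show (2 : ZMod 4) • liftB (a + b) ∈ C
          have h0 : (2 : ZMod 4) • liftB (a + b)
              = (2 : ZMod 4) • liftB a + (2 : ZMod 4) • liftB b := by
            funext i
            simpa [liftB, Pi.smul_apply, smul_eq_mul] using lift_add (a i) (b i)
          rw [h0]; exact C.add_mem ha hb
        smul_mem' := by
          intro c t ht
          rcases zmod2_cases c with rfl | rfl
          · show (2 : ZMod 4) • liftB ((0 : ZMod 2) • t) ∈ C
            have h0 : liftB ((0 : ZMod 2) • t) = 0 := by funext i; simp [liftB]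
            rw [h0, smul_zero]; exact C.zero_mem
          · simpa using ht } with hT
    have hRmem : ∀ y, y ∈ R ↔ ∃ c ∈ C, y = res2 c := fun y => Iff.rfl
    have hTmem : ∀ t, t ∈ T ↔ (2 : ZMod 4) • liftB t ∈ C := fun t => Iff.rfl
    have hTR : T = (B n).orthogonal R := by
      ext t
      rw [hTmem, LinearMap.BilinForm.mem_orthogonal_iff]
      constructor
      · rintro ht r ⟨c, hc, rfl⟩
        show B n (res2 c) t = 0
        rw [B_apply]
        exact (key c t).mp ((hsd c).mp hc _ ht)
      · intro h
        rw [hsd]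
        intro y hy
        rw [z4inner_comm]
        exact (key y t).mpr (by
          have := h (res2 y) ⟨y, hy, rfl⟩
          rwa [B_apply] at this)
    have hRT : R = (B n).orthogonal T := by
      rw [hTR, LinearMap.BilinForm.orthogonal_orthogonal B_nondegen B_refl]
    intro y
    rw [← hRmem, hRT, LinearMap.BilinForm.mem_orthogonal_iff]
    constructor
    · intro h t ht
      have := h t ((hTmem t).mpr ht)
      rw [B_apply] at this
      rw [← this]
      exact Finset.sum_congr rfl fun i _ => mul_comm _ _
    · intro h t ht
      rw [B_apply]
      rw [← h t ((hTmem t).mp ht)]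
      exact Finset.sum_congr rfl fun i _ => mul_comm _ _
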